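/- Let C be an additive category with an exact structure D, assume C has enough D-injectives and enough D-projectives, and let E be an exact structure D-projectively generated by a class 𝓜. Then the class of D-E-divisible objects is closed under D-deflations (i.e., for every D-conflation X ↣ Y ↠ Z with Y D-E-divisible, Z is D-E-divisible) if and only if for every D-conflation Z ↣ U ↠ V with V ∈ 𝓜 and U D-projective, Z is D-projective. -/

import Mathlib

open CategoryTheory Limits ZeroObject

universe v u

variable {C : Type u} [CategoryTheory.Category.{v} C] [CategoryTheory.Preadditive C]
  [CategoryTheory.Limits.HasZeroObject C] [CategoryTheory.Limits.HasFiniteBiproducts C]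

/-- An exact structure on an additive category in the sense of Quillen–Keller:
a class of kernel-cokernel pairs (conflations) satisfying the axioms
[E0], [E1], [E2], [E2ᵒᵖ]. -/
structure ExactStructure (C : Type u) [CategoryTheory.Category.{v} C]
    [CategoryTheory.Preadditive C] [CategoryTheory.Limits.HasZeroObject C]
    [CategoryTheory.Limits.HasFiniteBiproducts C] where
  /-- the distinguished class of short exact sequences -/
  conf : ∀ ⦃X Y Z : C⦄, (X ⟶ Y) → (Y ⟶ Z) → Prop
  /-- every conflation is a kernel-cokernel pair -/
  kerCoker : ∀ {X Y Z : C} (i : X ⟶ Y) (d : Y ⟶ Z), conf i d →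
    ∃ w : i ≫ d = 0,
      Nonempty (IsLimit (KernelFork.ofι i w)) ∧
      Nonempty (IsColimit (CokernelCofork.ofπ d w))
  /-- [E0] the identity of the zero object is a deflation -/
  id_zero_deflation : ∃ (X : C) (i : X ⟶ (0 : C)), conf i (𝟙 (0 : C))
  /-- [E1] the composition of two deflations is a deflation -/
  comp_deflation : ∀ {Y Z W : C} (d : Y ⟶ Z) (e : Z ⟶ W),
    (∃ (X : C) (i : X ⟶ Y), conf i d) → (∃ (X : C) (i : X ⟶ Z), conf i e) →
    ∃ (X : C) (i : X ⟶ Y), conf i (d ≫ e)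
  /-- [E2] pullbacks of deflations along arbitrary morphisms exist and are deflations -/
  pullback_deflation : ∀ {Y Z Z' : C} (d : Y ⟶ Z) (f : Z' ⟶ Z),
    (∃ (X : C) (i : X ⟶ Y), conf i d) →
    ∃ (P : C) (p₁ : P ⟶ Y) (p₂ : P ⟶ Z') (comm : p₁ ≫ d = p₂ ≫ f),
      Nonempty (IsLimit (PullbackCone.mk p₁ p₂ comm)) ∧
      ∃ (X : C) (i : X ⟶ P), conf i p₂
  /-- [E2ᵒᵖ] pushouts of inflations along arbitrary morphisms exist and are inflations -/
  pushout_inflation : ∀ {X Y X' : C} (i : X ⟶ Y) (f : X ⟶ X'),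
    (∃ (Z : C) (d : Y ⟶ Z), conf i d) →
    ∃ (Q : C) (q₁ : Y ⟶ Q) (q₂ : X' ⟶ Q) (comm : i ≫ q₁ = f ≫ q₂),
      Nonempty (IsColimit (PushoutCocone.mk q₁ q₂ comm)) ∧
      ∃ (Z : C) (d : Q ⟶ Z), conf q₂ d

/-- `i` is an `E`-inflation. -/
def ExactStructure.Inflation (E : ExactStructure C) {X Y : C} (i : X ⟶ Y) : Prop :=
  ∃ (Z : C) (d : Y ⟶ Z), E.conf i d

/-- `d` is an `E`-deflation. -/
def ExactStructure.Deflation (E : ExactStructure C) {Y Z : C} (d : Y ⟶ Z) : Prop :=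
  ∃ (X : C) (i : X ⟶ Y), E.conf i d

/-- `X` is `D`-`E`-divisible: every `D`-inflation starting at `X` is an `E`-inflation. -/
def Divisible (D E : ExactStructure C) (X : C) : Prop :=
  ∀ {Y : C} (i : X ⟶ Y), D.Inflation i → E.Inflation i

/-- `Z` is `D`-`E`-flat: every `D`-deflation ending at `Z` is an `E`-deflation. -/
def Flat (D E : ExactStructure C) (Z : C) : Prop :=
  ∀ {Y : C} (d : Y ⟶ Z), D.Deflation d → E.Deflation d

/-- `Ext¹_D(Z, X) = 0`: every `D`-conflation `X ↣ Y ↠ Z` splits. -/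
def ExtZero (D : ExactStructure C) (Z X : C) : Prop :=
  ∀ {Y : C} (i : X ⟶ Y) (d : Y ⟶ Z), D.conf i d → ∃ r : Y ⟶ X, i ≫ r = 𝟙 X

/-- `X` is `D`-injective: every `D`-inflation starting at `X` splits. -/
def DInjective (D : ExactStructure C) (X : C) : Prop :=
  ∀ {Y Z : C} (i : X ⟶ Y) (d : Y ⟶ Z), D.conf i d → ∃ r : Y ⟶ X, i ≫ r = 𝟙 X

/-- `Z` is `D`-projective: every `D`-deflation ending at `Z` splits. -/
def DProjective (D : ExactStructure C) (Z : C) : Prop :=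
  ∀ {X Y : C} (i : X ⟶ Y) (d : Y ⟶ Z), D.conf i d → ∃ s : Z ⟶ Y, s ≫ d = 𝟙 Z

/-- `E` is the exact structure `D`-projectively generated by `M`:
its conflations are exactly the `D`-conflations with respect to which
every object of `M` is projective. -/
def ProjGenBy (D E : ExactStructure C) (M : Set C) : Prop :=
  ∀ {X Y Z : C} (i : X ⟶ Y) (d : Y ⟶ Z),
    E.conf i d ↔ (D.conf i d ∧ ∀ M' ∈ M, ∀ g : M' ⟶ Z, ∃ h : M' ⟶ Y, h ≫ d = g)

/-- `E` is the exact structure `D`-injectively generated by `M`: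
its conflations are exactly the `D`-conflations with respect to which
every object of `M` is injective. -/
def InjGenBy (D E : ExactStructure C) (M : Set C) : Prop :=
  ∀ {X Y Z : C} (i : X ⟶ Y) (d : Y ⟶ Z),
    E.conf i d ↔ (D.conf i d ∧ ∀ M' ∈ M, ∀ g : X ⟶ M', ∃ h : Y ⟶ M', i ≫ h = g)

/-- `𝓐^{⊥_D}`. -/
def rightPerp (D : ExactStructure C) (A : Set C) : Set C :=
  {X | ∀ a ∈ A, ExtZero D a X}

/-- `^{⊥_D}𝓐`. -/
def leftPerp (D : ExactStructure C) (A : Set C) : Set C :=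
  {X | ∀ a ∈ A, ExtZero D X a}

/-- `(𝓐, 𝓑)` is a `D`-cotorsion pair. -/
def CotorsionPair (D : ExactStructure C) (A B : Set C) : Prop :=
  rightPerp D A = B ∧ leftPerp D B = A

/-- `C` has enough `D`-injectives. -/
def EnoughInjectives (D : ExactStructure C) : Prop :=
  ∀ X : C, ∃ (Y Z : C) (i : X ⟶ Y) (d : Y ⟶ Z), D.conf i d ∧ DInjective D Y

/-- `C` has enough `D`-projectives. -/
def EnoughProjectives (D : ExactStructure C) : Prop :=
  ∀ Z : C, ∃ (X Y : C) (i : X ⟶ Y) (d : Y ⟶ Z), D.conf i d ∧ DProjective D Y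

section Aux

variable {D E : ExactStructure C}

lemma conf_w {X Y Z : C} {i : X ⟶ Y} {d : Y ⟶ Z} (h : D.conf i d) : i ≫ d = 0 :=
  (D.kerCoker i d h).choose

lemma conf_lift {X Y Z W : C} {i : X ⟶ Y} {d : Y ⟶ Z} (h : D.conf i d)
    (g : W ⟶ Y) (hg : g ≫ d = 0) : ∃ l : W ⟶ X, l ≫ i = g := by
  obtain ⟨w, ⟨hk⟩, -⟩ := D.kerCoker i d h
  obtain ⟨l, hl⟩ := KernelFork.IsLimit.lift' hk g hg
  exact ⟨l, by simpa using hl⟩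

lemma conf_desc {X Y Z W : C} {i : X ⟶ Y} {d : Y ⟶ Z} (h : D.conf i d)
    (g : Y ⟶ W) (hg : i ≫ g = 0) : ∃ l : Z ⟶ W, d ≫ l = g := by
  obtain ⟨w, -, ⟨hc⟩⟩ := D.kerCoker i d h
  obtain ⟨l, hl⟩ := CokernelCofork.IsColimit.desc' hc g hg
  exact ⟨l, by simpa using hl⟩

lemma conf_mono {X Y Z W : C} {i : X ⟶ Y} {d : Y ⟶ Z} (h : D.conf i d)
    {u v : W ⟶ X} (e : u ≫ i = v ≫ i) : u = v := by
  obtain ⟨w, ⟨hk⟩, -⟩ := D.kerCoker i d h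
  exact Fork.IsLimit.hom_ext hk (by simpa using e)

lemma conf_epi {X Y Z W : C} {i : X ⟶ Y} {d : Y ⟶ Z} (h : D.conf i d)
    {u v : Z ⟶ W} (e : d ≫ u = d ≫ v) : u = v := by
  obtain ⟨w, -, ⟨hc⟩⟩ := D.kerCoker i d h
  exact Cofork.IsColimit.hom_ext hc (by simpa using e)

/-- From a retraction of the inflation, get a section of the deflation. -/
lemma sec_of_retr {X Y Z : C} {i : X ⟶ Y} {d : Y ⟶ Z} (h : D.conf i d)
    (r : Y ⟶ X) (hr : i ≫ r = 𝟙 X) : ∃ s : Z ⟶ Y, s ≫ d = 𝟙 Z := by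
  obtain ⟨s, hs⟩ := conf_desc h (𝟙 Y - r ≫ i)
    (by rw [Preadditive.comp_sub, Category.comp_id, ← Category.assoc, hr, Category.id_comp, sub_self])
  refine ⟨s, conf_epi h ?_⟩
  rw [← Category.assoc, hs, Preadditive.sub_comp, Category.id_comp, Category.assoc, conf_w h,
    comp_zero, sub_zero, Category.comp_id]

/-- `D`-projective objects lift against `D`-deflations. -/
lemma proj_lift {P : C} (hP : DProjective D P) {Y Z : C} {e : Y ⟶ Z}
    (he : D.Deflation e) (f : P ⟶ Z) : ∃ h : P ⟶ Y, h ≫ e = f := by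
  obtain ⟨Q, p₁, p₂, comm, ⟨-⟩, X', i', hconf⟩ := D.pullback_deflation e f he
  obtain ⟨s, hs⟩ := hP i' p₂ hconf
  exact ⟨s ≫ p₁, by rw [Category.assoc, comm, ← Category.assoc, hs, Category.id_comp]⟩

/-- Maps into a `D`-injective object extend along `D`-inflations. -/
lemma inj_extend {I : C} (hI : DInjective D I) {A B : C} {m : A ⟶ B}
    (hm : D.Inflation m) (f : A ⟶ I) : ∃ h : B ⟶ I, m ≫ h = f := by
  obtain ⟨Q, q₁, q₂, comm, ⟨-⟩, Z', d', hconf⟩ := D.pushout_inflation m f hm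
  obtain ⟨r, hr⟩ := hI q₂ d' hconf
  exact ⟨q₁ ≫ r, by rw [← Category.assoc, comm, Category.assoc, hr, Category.comp_id]⟩

end Aux

/-- With enough `D`-injectives and `D`-projectives and `E` `D`-projectively
generated by `M`, the class of `D`-`E`-divisible objects is closed under
`D`-deflations iff for every `D`-conflation `Z ↣ U ↠ V` with `V ∈ M` and `U`
`D`-projective, `Z` is `D`-projective. -/
theorem divisible_closed_deflations_iff
    (D E : ExactStructure C) (M : Set C) (hE : ProjGenBy D E M)
    (hi : EnoughInjectives D) (hp : EnoughProjectives D) :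
    (∀ {X Y Z : C} (i : X ⟶ Y) (d : Y ⟶ Z), D.conf i d →
      Divisible D E Y → Divisible D E Z) ↔
    (∀ {Z U V : C} (j : Z ⟶ U) (p : U ⟶ V), D.conf j p →
      V ∈ M → DProjective D U → DProjective D Z) := by
  constructor
  · -- closure under deflations ⇒ projectivity condition
    intro hclosed Z U V j p hZU hV hU
    intro A B a dB hconfAB
    -- embed A into a D-injective
    obtain ⟨I, W, ι, ρ, hconfI, hInj⟩ := hi A
    -- D-injectives are divisible
    have hIdiv : Divisible D E I := by
      intro Y' i' hi'
      obtain ⟨Q', d', hc⟩ := hi'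
      refine ⟨Q', d', (hE i' d').mpr ⟨hc, ?_⟩⟩
      intro M' _ g
      obtain ⟨r, hr⟩ := hInj i' d' hc
      obtain ⟨s, hs⟩ := sec_of_retr hc r hr
      exact ⟨g ≫ s, by rw [Category.assoc, hs, Category.comp_id]⟩
    have hWdiv : Divisible D E W := hclosed ι ρ hconfI hIdiv
    -- extend ι along a
    obtain ⟨e, he⟩ := inj_extend hInj ⟨Z, dB, hconfAB⟩ ι
    -- induced map f : Z ⟶ W
    obtain ⟨f, hf⟩ := conf_desc hconfAB (e ≫ ρ)
      (by rw [← Category.assoc, he, conf_w hconfI])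
    -- push out j : Z ↣ U along f
    obtain ⟨T, q₁, q₂, comm, ⟨hcolim⟩, Z₂', d₂', hq₂D⟩ :=
      D.pushout_inflation j f ⟨V, p, hZU⟩
    obtain ⟨Z₂, d₂, hEconf⟩ := hWdiv q₂ ⟨Z₂', d₂', hq₂D⟩
    obtain ⟨hDconf₂, hlift₂⟩ := (hE q₂ d₂).mp hEconf
    -- the cokernel of q₂, computed via the pushout
    obtain ⟨π''₀, hπ₁₀, hπ₂₀⟩ := PushoutCocone.IsColimit.desc' hcolim p 0
      (by rw [conf_w hZU, comp_zero])
    obtain ⟨π'', hπ₁, hπ₂⟩ : ∃ π'' : T ⟶ V, q₁ ≫ π'' = p ∧ q₂ ≫ π'' = 0 :=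
      ⟨π''₀, by exact hπ₁₀, by exact hπ₂₀⟩
    -- d₂ factors through π''
    obtain ⟨ψ, hψ⟩ := conf_desc hZU (q₁ ≫ d₂)
      (by rw [← Category.assoc, comm, Category.assoc, conf_w hEconf, comp_zero])
    have hψ' : π'' ≫ ψ = d₂ := by
      apply PushoutCocone.IsColimit.hom_ext hcolim
      · exact (by rw [← Category.assoc, hπ₁, hψ] :
          q₁ ≫ π'' ≫ ψ = q₁ ≫ d₂)
      · exact (by rw [← Category.assoc, hπ₂, zero_comp, conf_w hEconf] :
          q₂ ≫ π'' ≫ ψ = q₂ ≫ d₂)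
    -- π'' factors through d₂
    obtain ⟨φ, hφ⟩ := conf_desc hEconf π'' hπ₂
    have hψφ : ψ ≫ φ = 𝟙 V := by
      apply conf_epi hZU
      rw [← Category.assoc, hψ, Category.assoc, hφ, hπ₁, Category.comp_id]
    -- lift ψ along d₂ using V ∈ M
    obtain ⟨h, hh⟩ := hlift₂ V hV ψ
    have hsec : h ≫ π'' = 𝟙 V := by
      rw [← hφ, ← Category.assoc, hh, hψφ]
    -- retraction of q₂
    obtain ⟨r', hr'⟩ := conf_lift hEconf (𝟙 T - π'' ≫ h)
      (by rw [Preadditive.sub_comp, Category.id_comp, Category.assoc, hh, hψ', sub_self])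
    have hq₂r' : q₂ ≫ r' = 𝟙 W := by
      apply conf_mono hEconf
      rw [Category.assoc, hr', Preadditive.comp_sub, Category.comp_id,
        ← Category.assoc, hπ₂, zero_comp, sub_zero, Category.id_comp]
    -- lift along ρ using projectivity of U
    obtain ⟨g₂, hg₂⟩ := proj_lift hU ⟨A, ι, hconfI⟩ (q₁ ≫ r')
    have hg : (j ≫ g₂) ≫ ρ = f := by
      rw [Category.assoc, hg₂, ← Category.assoc, comm, Category.assoc,
        hq₂r', Category.comp_id]
    -- retraction of a
    obtain ⟨h', hh'⟩ := conf_lift hconfI (e - dB ≫ (j ≫ g₂))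
      (by rw [Preadditive.sub_comp, Category.assoc, hg, hf, sub_self])
    have hret : a ≫ h' = 𝟙 A := by
      apply conf_mono hconfI
      rw [Category.assoc, hh', Preadditive.comp_sub, he,
        ← Category.assoc, conf_w hconfAB, zero_comp, sub_zero, Category.id_comp]
    exact sec_of_retr hconfAB h' hret
  · -- projectivity condition ⇒ closure under deflations
    intro hproj X Y Z i dYZ hconfXY hYdiv
    intro W jZW hinfl
    obtain ⟨Q, d', hconfZW⟩ := hinfl
    refine ⟨Q, d', (hE jZW d').mpr ⟨hconfZW, ?_⟩⟩
    intro M' hM' g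
    obtain ⟨K, P, k, π, hconfKP, hPproj⟩ := hp M'
    have hKproj : DProjective D K := hproj k π hconfKP hM' hPproj
    obtain ⟨h, hh⟩ := proj_lift hPproj ⟨Z, jZW, hconfZW⟩ (π ≫ g)
    obtain ⟨t, ht⟩ := conf_lift hconfZW (k ≫ h)
      (by rw [Category.assoc, hh, ← Category.assoc, conf_w hconfKP, zero_comp])
    obtain ⟨u, hu⟩ := proj_lift hKproj ⟨X, i, hconfXY⟩ t
    obtain ⟨Q', q₁, q₂, comm, ⟨hcolim⟩, Z₂', d₂', hq₂D⟩ :=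
      D.pushout_inflation k u ⟨M', π, hconfKP⟩
    obtain ⟨Z₂, d₂, hEconf⟩ := hYdiv q₂ ⟨Z₂', d₂', hq₂D⟩
    obtain ⟨hDconf₂, hlift₂⟩ := (hE q₂ d₂).mp hEconf
    obtain ⟨π'₀, hπ₁₀, hπ₂₀⟩ := PushoutCocone.IsColimit.desc' hcolim π 0
      (by rw [conf_w hconfKP, comp_zero])
    obtain ⟨π', hπ₁, hπ₂⟩ : ∃ π' : Q' ⟶ M', q₁ ≫ π' = π ∧ q₂ ≫ π' = 0 :=
      ⟨π'₀, by exact hπ₁₀, by exact hπ₂₀⟩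
    obtain ⟨ψ, hψ⟩ := conf_desc hconfKP (q₁ ≫ d₂)
      (by rw [← Category.assoc, comm, Category.assoc, conf_w hEconf, comp_zero])
    have hψ' : π' ≫ ψ = d₂ := by
      apply PushoutCocone.IsColimit.hom_ext hcolim
      · exact (by rw [← Category.assoc, hπ₁, hψ] :
          q₁ ≫ π' ≫ ψ = q₁ ≫ d₂)
      · exact (by rw [← Category.assoc, hπ₂, zero_comp, conf_w hEconf] :
          q₂ ≫ π' ≫ ψ = q₂ ≫ d₂)
    obtain ⟨φ, hφ⟩ := conf_desc hEconf π' hπ₂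
    have hψφ : ψ ≫ φ = 𝟙 M' := by
      apply conf_epi hconfKP
      rw [← Category.assoc, hψ, Category.assoc, hφ, hπ₁, Category.comp_id]
    obtain ⟨h₀, hh₀⟩ := hlift₂ M' hM' ψ
    have hsec : h₀ ≫ π' = 𝟙 M' := by
      rw [← hφ, ← Category.assoc, hh₀, hψφ]
    obtain ⟨w₀, hw₁₀, hw₂₀⟩ := PushoutCocone.IsColimit.desc' hcolim h (dYZ ≫ jZW)
      (by rw [← ht, ← hu, Category.assoc])
    obtain ⟨w, hw₁, hw₂⟩ : ∃ w : Q' ⟶ W, q₁ ≫ w = h ∧ q₂ ≫ w = dYZ ≫ jZW :=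
      ⟨w₀, by exact hw₁₀, by exact hw₂₀⟩
    have hwd : w ≫ d' = π' ≫ g := by
      apply PushoutCocone.IsColimit.hom_ext hcolim
      · exact (by rw [← Category.assoc, hw₁, hh, ← Category.assoc, hπ₁] :
          q₁ ≫ w ≫ d' = q₁ ≫ π' ≫ g)
      · exact (by rw [← Category.assoc, hw₂, Category.assoc, conf_w hconfZW,
          comp_zero, ← Category.assoc, hπ₂, zero_comp] :
          q₂ ≫ w ≫ d' = q₂ ≫ π' ≫ g)
    exact ⟨h₀ ≫ w, by rw [Category.assoc, hwd, ← Category.assoc, hsec, Category.id_comp]⟩
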